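/- For the radius gadget (G,w): if F'(x,y)=1 then R_{G,w} ≤ max{2α, β} + n, and if F'(x,y)=0 then R_{G,w} ≥ min{α+β, 3α}. -/

import Mathlib

open scoped ENNReal

set_option linter.unusedVariables false

/-- The length of a walk with respect to `ℝ≥0∞` edge weights. -/
noncomputable def wlen {V : Type*} (G : SimpleGraph V) (w : V → V → ℝ≥0∞) {u v : V}
    (p : G.Walk u v) : ℝ≥0∞ :=
  (p.darts.map fun d => w d.toProd.1 d.toProd.2).sum

/-- The weighted distance: the infimum of walk lengths. -/
noncomputable def wdist {V : Type*} (G : SimpleGraph V) (w : V → V → ℝ≥0∞) (u v : V) : ℝ≥0∞ :=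
  ⨅ p : G.Walk u v, wlen G w p

/-- Eccentricity `e_{G,w}(u) = max_v d_{G,w}(u,v)`. -/
noncomputable def wecc {V : Type*} (G : SimpleGraph V) (w : V → V → ℝ≥0∞) (u : V) : ℝ≥0∞ :=
  ⨆ v, wdist G w u v

/-- Weighted radius `R_{G,w} = min_u e_{G,w}(u)`. -/
noncomputable def wrad {V : Type*} (G : SimpleGraph V) (w : V → V → ℝ≥0∞) : ℝ≥0∞ :=
  ⨅ u, wecc G w u

/-- Vertices of the radius gadget. -/
inductive RV (h s ℓ : ℕ) where
  /-- tree node `t_{i,j}` encoded in heap order: `t m` is the tree node numbered `m+1`,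
  i.e. the node of depth `i` and position `j` with `m + 1 = 2^i + (j-1)`. -/
  | t (m : Fin (2 ^ (h + 1) - 1))
  /-- path node `p_{i+1, j+1}` -/
  | p (i : Fin (2 * s + ℓ)) (j : Fin (2 ^ h))
  /-- the extra node `a_0` -/
  | a0
  /-- node `a_{i+1}` -/
  | a (i : Fin (2 ^ s))
  /-- node `b_{i+1}` -/
  | b (i : Fin (2 ^ s))
  /-- node `a^z_{j+1}` -/
  | ah (z : Bool) (j : Fin s)
  /-- node `b^z_{j+1}` -/
  | bh (z : Bool) (j : Fin s)
  /-- node `a*_{j+1}` -/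
  | as (j : Fin ℓ)
  /-- node `b*_{j+1}` -/
  | bs (j : Fin ℓ)
  deriving DecidableEq, Fintype

/-- Base (oriented) adjacency of the radius gadget.  Here `bin(i,j)` is realized as
`Nat.testBit` on the 0-based index. -/
def rgadgetAdj0 {h s ℓ : ℕ} : RV h s ℓ → RV h s ℓ → Prop
  | .t m, .t m' => 1 ≤ m.val ∧ m'.val + 1 = (m.val + 1) / 2
  | .t m, .p _ j => m.val + 1 = 2 ^ h + j.val
  | .p i j, .p i' j' => i = i' ∧ j.val = j'.val + 1
  | .ah z jj, .p i j => i.val = 2 * jj.val + (if z then 1 else 0) ∧ j.val = 0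
  | .bh z jj, .p i j => i.val = 2 * jj.val + (if z then 0 else 1) ∧ j.val = 2 ^ h - 1
  | .as jj, .p i j => i.val = 2 * s + jj.val ∧ j.val = 0
  | .bs jj, .p i j => i.val = 2 * s + jj.val ∧ j.val = 2 ^ h - 1
  | .a i, .ah z j => z = i.val.testBit j.val
  | .b i, .bh z j => z = i.val.testBit j.val
  | .a i, .a i' => i ≠ i'
  | .b i, .b i' => i ≠ i'
  | .a _, .as _ => True
  | .b _, .bs _ => True
  | .a0, .a _ => True
  | _, _ => False

/-- The radius gadget graph. -/
def rgadget (h s ℓ : ℕ) : SimpleGraph (RV h s ℓ) where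
  Adj u v := u ≠ v ∧ (rgadgetAdj0 u v ∨ rgadgetAdj0 v u)
  symm := ⟨fun u v huv => ⟨huv.1.symm, huv.2.symm⟩⟩
  loopless := ⟨fun u hu => hu.1 rfl⟩

/-- The weights of the radius gadget: tree edges, path edges and the attachment edges of
`a^z_j, b^z_j, a*_j, b*_j` to the paths have weight `1`; leaf–path edges,
`a_i`–`a^{bin(i,j)}_j`, `b_i`–`b^{bin(i,j)}_j` edges and clique edges have weight `α`;
`a_i`–`a*_j` has weight `α` if `x_{i,j}=1` and `β` otherwise, similarly `b_i`–`b*_j`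
according to `y`; and the edges `a_0`–`a_i` have weight `2α`. -/
def rgadgetW {h s ℓ : ℕ} (x y : Fin (2 ^ s) → Fin ℓ → Bool) (α β : ℕ) :
    RV h s ℓ → RV h s ℓ → ℕ
  | .a i, .as j => if x i j then α else β
  | .as j, .a i => if x i j then α else β
  | .b i, .bs j => if y i j then α else β
  | .bs j, .b i => if y i j then α else β
  | .a0, .a _ => 2 * α
  | .a _, .a0 => 2 * α
  | .t _, .p _ _ => α
  | .p _ _, .t _ => α
  | .a _, .ah _ _ => α
  | .ah _ _, .a _ => α
  | .b _, .bh _ _ => α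
  | .bh _ _, .b _ => α
  | .a _, .a _ => α
  | .b _, .b _ => α
  | _, _ => 1

section Generic

open SimpleGraph

variable {V : Type*} {G : SimpleGraph V} {w : V → V → ℝ≥0∞}

lemma wlen_nil {u : V} : wlen G w (Walk.nil : G.Walk u u) = 0 := by
  simp [wlen]

lemma wlen_cons {u v v' : V} (ha : G.Adj u v) (p : G.Walk v v') :
    wlen G w (Walk.cons ha p) = w u v + wlen G w p := by
  simp [wlen, Walk.darts_cons]

lemma wlen_append {u v v' : V} (p : G.Walk u v) (q : G.Walk v v') :
    wlen G w (p.append q) = wlen G w p + wlen G w q := by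
  simp [wlen, Walk.darts_append]

lemma wlen_reverse (hw : ∀ a b, w a b = w b a) {u v : V} (p : G.Walk u v) :
    wlen G w p.reverse = wlen G w p := by
  simp only [wlen, Walk.darts_reverse, List.map_reverse, List.sum_reverse, List.map_map]
  congr 1
  refine List.map_congr_left fun d _ => ?_
  exact hw _ _

lemma wdist_le_wlen {u v : V} (p : G.Walk u v) : wdist G w u v ≤ wlen G w p :=
  iInf_le _ p

lemma walk_pot (g : V → ℝ≥0∞) (hLip : ∀ a b, G.Adj a b → g b ≤ g a + w a b)
    {u v : V} (p : G.Walk u v) : g v ≤ g u + wlen G w p := by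
  induction p with
  | nil => simp
  | cons ha q ih =>
      rename_i a b c
      calc g c ≤ g b + wlen G w q := ih
        _ ≤ (g a + w a b) + wlen G w q := by gcongr; exact hLip _ _ ha
        _ = g a + wlen G w (Walk.cons ha q) := by rw [wlen_cons]; ring

lemma pot_le_wdist (g : V → ℝ≥0∞) (hLip : ∀ a b, G.Adj a b → g b ≤ g a + w a b)
    {u v : V} (hu : g u = 0) : g v ≤ wdist G w u v := by
  refine le_iInf fun p => ?_
  simpa [hu] using walk_pot g hLip p

end Generic

section Gadget

open SimpleGraph

variable {h s ℓ : ℕ}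

lemma two_pow_pos' (k : ℕ) : 0 < 2 ^ k := Nat.pow_pos (by norm_num)

-- adjacency helpers
lemma adj_tt (m m' : Fin (2 ^ (h+1) - 1)) (h1 : 1 ≤ m.val)
    (h2 : m'.val + 1 = (m.val + 1) / 2) :
    (rgadget h s ℓ).Adj (.t m) (.t m') := by
  refine ⟨?_, Or.inl ⟨h1, h2⟩⟩
  intro hE
  rw [RV.t.injEq] at hE
  subst hE
  omega

lemma adj_tp (m : Fin (2 ^ (h+1) - 1)) (r : Fin (2*s+ℓ)) (k : Fin (2^h))
    (hm : m.val + 1 = 2 ^ h + k.val) :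
    (rgadget h s ℓ).Adj (.t m) (.p r k) := by
  exact ⟨(fun hE => nomatch hE), Or.inl hm⟩

lemma adj_pp (r : Fin (2*s+ℓ)) (k k' : Fin (2^h)) (hk : k'.val = k.val + 1) :
    (rgadget h s ℓ).Adj (.p r k) (.p r k') := by
  refine ⟨?_, Or.inr ⟨rfl, hk⟩⟩
  intro hE
  rw [RV.p.injEq] at hE
  have := congrArg Fin.val hE.2
  omega

lemma adj_ah_p (z : Bool) (jj : Fin s) (r : Fin (2*s+ℓ)) (k : Fin (2^h))
    (hr : r.val = 2 * jj.val + (if z then 1 else 0)) (hk : k.val = 0) :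
    (rgadget h s ℓ).Adj (.ah z jj) (.p r k) := by
  exact ⟨(fun hE => nomatch hE), Or.inl ⟨hr, hk⟩⟩

lemma adj_bh_p (z : Bool) (jj : Fin s) (r : Fin (2*s+ℓ)) (k : Fin (2^h))
    (hr : r.val = 2 * jj.val + (if z then 0 else 1)) (hk : k.val = 2^h - 1) :
    (rgadget h s ℓ).Adj (.bh z jj) (.p r k) := by
  exact ⟨(fun hE => nomatch hE), Or.inl ⟨hr, hk⟩⟩

lemma adj_as_p (jj : Fin ℓ) (r : Fin (2*s+ℓ)) (k : Fin (2^h))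
    (hr : r.val = 2 * s + jj.val) (hk : k.val = 0) :
    (rgadget h s ℓ).Adj (.as jj) (.p r k) := by
  exact ⟨(fun hE => nomatch hE), Or.inl ⟨hr, hk⟩⟩

lemma adj_bs_p (jj : Fin ℓ) (r : Fin (2*s+ℓ)) (k : Fin (2^h))
    (hr : r.val = 2 * s + jj.val) (hk : k.val = 2^h - 1) :
    (rgadget h s ℓ).Adj (.bs jj) (.p r k) := by
  exact ⟨(fun hE => nomatch hE), Or.inl ⟨hr, hk⟩⟩

lemma adj_a_ah (i : Fin (2^s)) (z : Bool) (j : Fin s) (hz : z = i.val.testBit j.val) :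
    (rgadget h s ℓ).Adj (.a i) (.ah z j) := by
  exact ⟨(fun hE => nomatch hE), Or.inl hz⟩

lemma adj_b_bh (i : Fin (2^s)) (z : Bool) (j : Fin s) (hz : z = i.val.testBit j.val) :
    (rgadget h s ℓ).Adj (.b i) (.bh z j) := by
  exact ⟨(fun hE => nomatch hE), Or.inl hz⟩

lemma adj_aa (i i' : Fin (2^s)) (hne : i ≠ i') :
    (rgadget h s ℓ).Adj (.a i) (.a i') := by
  refine ⟨?_, Or.inl hne⟩
  intro hE
  rw [RV.a.injEq] at hE
  exact hne hE

lemma adj_a_as (i : Fin (2^s)) (j : Fin ℓ) :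
    (rgadget h s ℓ).Adj (.a i) (.as j) := by
  exact ⟨(fun hE => nomatch hE), Or.inl trivial⟩

lemma adj_b_bs (i : Fin (2^s)) (j : Fin ℓ) :
    (rgadget h s ℓ).Adj (.b i) (.bs j) := by
  exact ⟨(fun hE => nomatch hE), Or.inl trivial⟩

lemma adj_a0_a (i : Fin (2^s)) :
    (rgadget h s ℓ).Adj .a0 (.a i) := by
  exact ⟨(fun hE => nomatch hE), Or.inl trivial⟩

variable (x y : Fin (2 ^ s) → Fin ℓ → Bool) (α β : ℕ)

lemma Wsymm : ∀ u v : RV h s ℓ, rgadgetW x y α β u v = rgadgetW x y α β v u := by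
  intro u v
  cases u <;> cases v <;> rfl

/-- `u` can be reached from `v` by a walk of weighted length at most `c`. -/
def reach (u v : RV h s ℓ) (c : ℕ) : Prop :=
  ∃ p : (rgadget h s ℓ).Walk u v,
    wlen _ (fun a b => ((rgadgetW x y α β a b : ℕ) : ℝ≥0∞)) p ≤ (c : ℝ≥0∞)

lemma reach_refl (u : RV h s ℓ) : reach x y α β u u 0 :=
  ⟨Walk.nil, by rw [wlen_nil]; simp⟩

lemma reach_mono {u v : RV h s ℓ} {c c' : ℕ} (hc : c ≤ c') (hr : reach x y α β u v c) :
    reach x y α β u v c' := by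
  obtain ⟨p, hp⟩ := hr
  exact ⟨p, hp.trans (by exact_mod_cast Nat.cast_le.mpr hc)⟩

lemma reach_trans {u v w : RV h s ℓ} {c d : ℕ} (h1 : reach x y α β u v c)
    (h2 : reach x y α β v w d) : reach x y α β u w (c + d) := by
  obtain ⟨p, hp⟩ := h1
  obtain ⟨q, hq⟩ := h2
  refine ⟨p.append q, ?_⟩
  rw [wlen_append]
  push_cast
  exact add_le_add hp hq

lemma reach_step {u v : RV h s ℓ} {c : ℕ} (ha : (rgadget h s ℓ).Adj u v)
    (hw : rgadgetW x y α β u v ≤ c) : reach x y α β u v c := by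
  refine ⟨Walk.cons ha Walk.nil, ?_⟩
  rw [wlen_cons, wlen_nil, add_zero]
  exact_mod_cast Nat.cast_le.mpr hw

lemma reach_symm {u v : RV h s ℓ} {c : ℕ} (hr : reach x y α β u v c) :
    reach x y α β v u c := by
  obtain ⟨p, hp⟩ := hr
  exact ⟨p.reverse, by rwa [wlen_reverse (fun a b => by rw [Wsymm x y α β a b])]⟩

end Gadget

section Routes

open SimpleGraph

variable {h s ℓ : ℕ} (x y : Fin (2 ^ s) → Fin ℓ → Bool) (α β : ℕ)

lemma reach_row (r : Fin (2*s+ℓ)) :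
    ∀ (kv : ℕ) (hkv : kv < 2^h),
      reach x y α β (.p r ⟨0, two_pow_pos' h⟩) (.p r ⟨kv, hkv⟩) kv := by
  intro kv
  induction kv with
  | zero => intro _; exact reach_refl x y α β _
  | succ kv ih =>
      intro hkv
      have h1 : kv < 2^h := by omega
      have step : reach x y α β (.p r ⟨kv, h1⟩) (.p r ⟨kv+1, hkv⟩) 1 :=
        reach_step x y α β (adj_pp r ⟨kv, h1⟩ ⟨kv+1, hkv⟩ rfl) (le_of_eq rfl)
      exact reach_trans x y α β (ih h1) step

lemma reach_t_root :
    ∀ (mv : ℕ) (hm : mv < 2^(h+1) - 1),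
      reach x y α β (.t (⟨mv, hm⟩ : Fin (2^(h+1)-1)))
        (.t ⟨0, by have := two_pow_pos' (h+1); omega⟩) mv := by
  intro mv
  induction mv using Nat.strong_induction_on with
  | _ mv ih =>
    intro hm
    rcases Nat.eq_zero_or_pos mv with h0 | h1
    · subst h0; exact reach_refl x y α β _
    · have hpv : (mv + 1) / 2 - 1 < mv := by omega
      have hpv2 : (mv + 1) / 2 - 1 < 2^(h+1) - 1 := Nat.lt_trans hpv hm
      have step : reach x y α β (.t ⟨mv, hm⟩) (.t ⟨(mv+1)/2 - 1, hpv2⟩) 1 :=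
        reach_step x y α β (adj_tt _ _ h1 (by simp only; omega)) (le_of_eq rfl)
      have htot := reach_trans x y α β step (ih _ hpv hpv2)
      exact reach_mono x y α β (by omega) htot

end Routes

section Routes2

open SimpleGraph

variable {h s ℓ : ℕ} (x y : Fin (2 ^ s) → Fin ℓ → Bool) (α β : ℕ)

lemma exists_diff_bit {i i' : Fin (2^s)} (hne : i ≠ i') :
    ∃ j : Fin s, i.val.testBit j.val ≠ i'.val.testBit j.val := by
  by_contra hc
  push_neg at hc
  apply hne
  apply Fin.ext
  apply Nat.eq_of_testBit_eq
  intro jv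
  by_cases hj : jv < s
  · exact hc ⟨jv, hj⟩
  · rw [Nat.testBit_lt_two_pow, Nat.testBit_lt_two_pow]
    · exact lt_of_lt_of_le i'.isLt (Nat.pow_le_pow_right (by norm_num) (by omega))
    · exact lt_of_lt_of_le i.isLt (Nat.pow_le_pow_right (by norm_num) (by omega))

/-- reach any `a`-hat node from `a i` within `2α`. -/
lemma reach_a_ah (i : Fin (2^s)) (z : Bool) (j : Fin s) :
    reach (h := h) x y α β (.a i) (.ah z j) (2*α) := by
  by_cases hz : z = i.val.testBit j.val
  · exact reach_step x y α β (adj_a_ah i z j hz) (by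
      show α ≤ 2*α; omega)
  · have hlt : i.val ^^^ 2^j.val < 2^s :=
      Nat.xor_lt_two_pow i.isLt
        (lt_of_lt_of_le (Nat.pow_lt_pow_right (by norm_num) j.isLt) le_rfl)
    set i' : Fin (2^s) := ⟨i.val ^^^ 2^j.val, hlt⟩ with hi'
    have hbit : i'.val.testBit j.val = !(i.val.testBit j.val) := by
      simp [hi', Nat.testBit_xor, Nat.testBit_two_pow_self]
    have hzb : z = i'.val.testBit j.val := by
      rw [hbit]
      cases hzz : i.val.testBit j.val <;> cases z <;> simp_all
    have hne : i ≠ i' := by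
      intro hE
      apply hz
      rw [hE, hzb]
    have s1 : reach (h := h) x y α β (.a i) (.a i') α :=
      reach_step x y α β (adj_aa i i' hne) (le_of_eq rfl)
    have s2 : reach (h := h) x y α β (.a i') (.ah z j) α :=
      reach_step x y α β (adj_a_ah i' z j hzb) (le_of_eq rfl)
    exact reach_mono x y α β (by omega) (reach_trans x y α β s1 s2)

/-- reach the start of any row from `a i` within `max 2α β + 1`. -/
lemma reach_a_rowstart (i : Fin (2^s)) (r : Fin (2*s+ℓ)) :
    reach x y α β (.a i) (.p r ⟨0, two_pow_pos' h⟩) (max (2*α) β + 1) := by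
  by_cases hr : r.val < 2*s
  · have hjj : r.val / 2 < s := by omega
    set z : Bool := decide (r.val % 2 = 1) with hzdef
    have hradj : r.val = 2 * (r.val/2) + (if z then 1 else 0) := by
      by_cases h2 : r.val % 2 = 1 <;> simp [hzdef, h2] <;> omega
    have s1 := reach_a_ah (h := h) x y α β i z ⟨r.val/2, hjj⟩
    have s2 : reach x y α β (.ah z ⟨r.val/2, hjj⟩) (.p r ⟨0, two_pow_pos' h⟩) 1 :=
      reach_step x y α β (adj_ah_p z _ r _ hradj rfl) (le_of_eq rfl)
    exact reach_mono x y α β (by omega) (reach_trans x y α β s1 s2)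
  · have hjl : r.val - 2*s < ℓ := by have := r.isLt; omega
    have hjj : r.val = 2 * s + ((⟨r.val - 2*s, hjl⟩ : Fin ℓ)).val := by
      simp only [Fin.val_mk]; omega
    set jj : Fin ℓ := ⟨r.val - 2*s, hjl⟩
    have s1 : reach (h := h) x y α β (.a i) (.as jj) (max (2*α) β) :=
      reach_step x y α β (adj_a_as i jj) (by
        show (if x i jj then α else β) ≤ _
        split <;> omega)
    have s2 : reach x y α β (.as jj) (.p r ⟨0, two_pow_pos' h⟩) 1 :=
      reach_step x y α β (adj_as_p jj r _ hjj rfl) (le_of_eq rfl)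
    exact reach_trans x y α β s1 s2

end Routes2

section Upper

open SimpleGraph

variable {h s ℓ : ℕ} (x y : Fin (2 ^ s) → Fin ℓ → Bool) (α β : ℕ)

lemma card_lb (hs : 1 ≤ s) (hl : 1 ≤ ℓ) :
    2^(h+1) - 1 + 3 * 2^h ≤ Fintype.card (RV h s ℓ) := by
  classical
  have hinj : Function.Injective
      (fun z : Fin (2^(h+1)-1) ⊕ Fin 3 × Fin (2^h) =>
        (match z with
          | .inl m => RV.t m
          | .inr (c, k) => RV.p ⟨c.val, by have := c.isLt; omega⟩ k : RV h s ℓ)) := by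
    rintro (m | ⟨c, k⟩) (m' | ⟨c', k'⟩) hE
    · simp only [RV.t.injEq] at hE
      rw [hE]
    · exact absurd hE (by simp)
    · exact absurd hE (by simp)
    · simp only [RV.p.injEq] at hE
      obtain ⟨h1, h2⟩ := hE
      have : c = c' := by
        apply Fin.ext
        have := congrArg Fin.val h1
        simpa using this
      rw [this, h2]
  have := Fintype.card_le_of_injective _ hinj
  simpa using this

lemma reach_wdist {u v : RV h s ℓ} {c : ℕ} (hc : reach x y α β u v c) :
    wdist (rgadget h s ℓ) (fun a b => ((rgadgetW x y α β a b : ℕ) : ℝ≥0∞)) u v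
      ≤ (c : ℝ≥0∞) := by
  obtain ⟨p, hp⟩ := hc
  exact (wdist_le_wlen p).trans hp

lemma ecc_ub (hh : 1 ≤ h) (hs : 1 ≤ s) (hl : 1 ≤ ℓ) (hα : 0 < α)
    (i : Fin (2^s)) (j : Fin ℓ) (hx : x i j = true) (hy : y i j = true)
    (n : ℕ) (hn : n = Fintype.card (RV h s ℓ)) (v : RV h s ℓ) :
    wdist (rgadget h s ℓ) (fun a b => ((rgadgetW x y α β a b : ℕ) : ℝ≥0∞)) (.a i) v
      ≤ ((max (2*α) β + n : ℕ) : ℝ≥0∞) := by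
  have hP : 2 ≤ 2^h := by
    calc 2 = 2^1 := by norm_num
    _ ≤ 2^h := Nat.pow_le_pow_right (by norm_num) hh
  have h2P : 2^(h+1) = 2 * 2^h := by rw [pow_succ]; ring
  have hnP : 2^(h+1) - 1 + 3 * 2^h ≤ n := hn ▸ card_lb hs hl
  have hM2 : 2*α ≤ max (2*α) β := le_max_left _ _
  have hMβ : β ≤ max (2*α) β := le_max_right _ _
  set M := max (2*α) β with hM
  -- helper: conclude from a reach bound
  have conc : ∀ {c : ℕ}, reach (h := h) x y α β (.a i) v c → c ≤ M + n →
      wdist (rgadget h s ℓ) (fun a b => ((rgadgetW x y α β a b : ℕ) : ℝ≥0∞)) (.a i) v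
        ≤ ((M + n : ℕ) : ℝ≥0∞) := by
    intro c hc hle
    exact (reach_wdist x y α β hc).trans (by exact_mod_cast Nat.cast_le.mpr hle)
  have hlast : 2^h - 1 < 2^h := by omega
  cases v with
  | t m =>
      set z0 : Bool := i.val.testBit 0 with hz0
      have hr0 : (if z0 then 1 else 0) < 2*s + ℓ := by split <;> omega
      set r0 : Fin (2*s+ℓ) := ⟨if z0 then 1 else 0, hr0⟩ with hr0d
      have s1 : reach (h := h) x y α β (.a i) (.ah z0 ⟨0, hs⟩) α :=
        reach_step x y α β (adj_a_ah i z0 ⟨0, hs⟩ hz0) (le_of_eq rfl)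
      have s2 : reach (h := h) x y α β (.ah z0 ⟨0, hs⟩) (.p r0 ⟨0, two_pow_pos' h⟩) 1 :=
        reach_step x y α β (adj_ah_p z0 ⟨0, hs⟩ r0 _ (by simp [hr0d]) rfl) (le_of_eq rfl)
      have hleaf : 2^h - 1 + 0 < 2^(h+1) - 1 := by omega
      have s3 : reach (h := h) x y α β (.p r0 ⟨0, two_pow_pos' h⟩)
          (.t ⟨2^h - 1 + 0, hleaf⟩) α := by
        refine reach_symm x y α β (reach_step x y α β (adj_tp _ r0 _ (by simp; omega)) ?_)
        exact le_of_eq rfl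
      have s4 := reach_t_root x y α β (2^h - 1 + 0) hleaf
      have s5 : reach (h := h) x y α β (.t ⟨0, by omega⟩) (.t m) m.val :=
        reach_symm x y α β (reach_t_root x y α β m.val m.isLt)
      have htot := reach_trans x y α β (reach_trans x y α β
        (reach_trans x y α β (reach_trans x y α β s1 s2) s3) s4) s5
      refine conc htot ?_
      have hmval := m.isLt
      omega
  | p r k =>
      have s1 := reach_a_rowstart (h := h) x y α β i r
      have s2 := reach_row (h := h) x y α β r k.val k.isLt
      have htot := reach_trans x y α β s1 s2
      refine conc htot ?_
      have := k.isLt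
      omega
  | a0 =>
      refine conc (reach_symm x y α β
        (reach_step x y α β (adj_a0_a i)
          (show rgadgetW x y α β RV.a0 (RV.a i) ≤ 2*α from le_of_eq rfl))) ?_
      omega
  | a i' =>
      by_cases hii : i' = i
      · subst hii
        exact conc (reach_refl x y α β _) (by omega)
      · refine conc (reach_step x y α β (adj_aa i i' (fun hE => hii hE.symm))
          (show rgadgetW x y α β (RV.a i) (RV.a i') ≤ α from le_of_eq rfl)) ?_
        omega
  | ah z j' =>
      exact conc (reach_a_ah (h := h) x y α β i z j') (by omega)
  | as j' =>
      refine conc (reach_step x y α β (adj_a_as i j')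
        (show (if x i j' then α else β) ≤ M by split <;> omega)) ?_
      omega
  | bh z j' =>
      have hr2 : 2*j'.val + (if z then 0 else 1) < 2*s + ℓ := by
        have := j'.isLt; split <;> omega
      set r2 : Fin (2*s+ℓ) := ⟨2*j'.val + (if z then 0 else 1), hr2⟩
      have s1 := reach_a_rowstart (h := h) x y α β i r2
      have s2 := reach_row (h := h) x y α β r2 (2^h - 1) hlast
      have s3 : reach (h := h) x y α β (.p r2 ⟨2^h - 1, hlast⟩) (.bh z j') 1 :=
        reach_symm x y α β (reach_step x y α β
          (adj_bh_p z j' r2 _ rfl rfl) (le_of_eq rfl))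
      have htot := reach_trans x y α β (reach_trans x y α β s1 s2) s3
      refine conc htot (by omega)
  | bs j' =>
      have hrs : 2*s + j'.val < 2*s + ℓ := by have := j'.isLt; omega
      set rs : Fin (2*s+ℓ) := ⟨2*s + j'.val, hrs⟩
      have s1 := reach_a_rowstart (h := h) x y α β i rs
      have s2 := reach_row (h := h) x y α β rs (2^h - 1) hlast
      have s3 : reach (h := h) x y α β (.p rs ⟨2^h - 1, hlast⟩) (.bs j') 1 :=
        reach_symm x y α β (reach_step x y α β
          (adj_bs_p j' rs _ rfl rfl) (le_of_eq rfl))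
      have htot := reach_trans x y α β (reach_trans x y α β s1 s2) s3
      refine conc htot (by omega)
  | b i' =>
      by_cases hii : i' = i
      · subst hii
        have hrs : 2 * s + j.val < 2 * s + ℓ := by have := j.isLt; omega
        set rs : Fin (2*s+ℓ) := ⟨2 * s + j.val, hrs⟩
        have s1 : reach (h := h) x y α β (.a i') (.as j) α :=
          reach_step x y α β (adj_a_as i' j)
            (by rw [show rgadgetW x y α β (.a i') (.as j) = if x i' j then α else β from rfl,
                hx]; simp)
        have s2 : reach (h := h) x y α β (.as j) (.p rs ⟨0, two_pow_pos' h⟩) 1 :=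
          reach_step x y α β (adj_as_p j rs _ rfl rfl) (le_of_eq rfl)
        have s3 := reach_row (h := h) x y α β rs (2^h - 1) hlast
        have s4 : reach (h := h) x y α β (.p rs ⟨2^h - 1, hlast⟩) (.bs j) 1 :=
          reach_symm x y α β (reach_step x y α β
            (adj_bs_p j rs _ rfl rfl) (le_of_eq rfl))
        have s5 : reach (h := h) x y α β (.bs j) (.b i') α :=
          reach_symm x y α β (reach_step x y α β (adj_b_bs i' j)
            (by rw [show rgadgetW x y α β (.b i') (.bs j) = if y i' j then α else β from rfl,
                hy]; simp))
        have htot := reach_trans x y α β (reach_trans x y α β (reach_trans x y α β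
          (reach_trans x y α β s1 s2) s3) s4) s5
        refine conc htot (by omega)
      · obtain ⟨jd, hdb⟩ := exists_diff_bit (fun hE => hii hE.symm)
        set z : Bool := i.val.testBit jd.val with hzd
        have hr1 : 2*jd.val + (if z then 1 else 0) < 2*s + ℓ := by
          have := jd.isLt; split <;> omega
        set r1 : Fin (2*s+ℓ) := ⟨2*jd.val + (if z then 1 else 0), hr1⟩
        have s1 : reach (h := h) x y α β (.a i) (.ah z jd) α :=
          reach_step x y α β (adj_a_ah i z jd hzd) (le_of_eq rfl)
        have s2 : reach (h := h) x y α β (.ah z jd) (.p r1 ⟨0, two_pow_pos' h⟩) 1 :=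
          reach_step x y α β (adj_ah_p z jd r1 _ rfl rfl) (le_of_eq rfl)
        have s3 := reach_row (h := h) x y α β r1 (2^h - 1) hlast
        have s4 : reach (h := h) x y α β (.p r1 ⟨2^h - 1, hlast⟩) (.bh (!z) jd) 1 := by
          refine reach_symm x y α β (reach_step x y α β
            (adj_bh_p (!z) jd r1 _ ?_ rfl) (le_of_eq rfl))
          cases hzz : z <;> simp [hzz, r1]
        have hbz : (!z) = i'.val.testBit jd.val := by
          have hdb' : i.val.testBit jd.val ≠ i'.val.testBit jd.val := hdb
          cases hb : i'.val.testBit jd.val <;> cases hbz2 : i.val.testBit jd.val <;>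
            simp_all
        have s5 : reach (h := h) x y α β (.bh (!z) jd) (.b i') α :=
          reach_symm x y α β (reach_step x y α β (adj_b_bh i' (!z) jd hbz)
            (le_of_eq rfl))
        have htot := reach_trans x y α β (reach_trans x y α β (reach_trans x y α β
          (reach_trans x y α β s1 s2) s3) s4) s5
        refine conc htot (by omega)

end Upper

section Lower

open SimpleGraph

/-- row value of the potential centered at `a i` -/
def prowPot {s ℓ : ℕ} (y : Fin (2 ^ s) → Fin ℓ → Bool) (α m : ℕ) (i : Fin (2 ^ s))
    (r : Fin (2 * s + ℓ)) : ℕ :=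
  if hr : r.val < 2 * s then
    (if i.val.testBit (r.val / 2) = decide (r.val % 2 = 1) then α else m)
  else
    (if y i ⟨r.val - 2 * s, by have := r.isLt; omega⟩ then m else α)

/-- potential centered at `a i` -/
def gpot {h s ℓ : ℕ} (y : Fin (2 ^ s) → Fin ℓ → Bool) (α m : ℕ) (i : Fin (2 ^ s)) :
    RV h s ℓ → ℕ
  | .t _ => 2 * α
  | .p r _ => prowPot y α m i r
  | .a0 => 2 * α
  | .a i' => if i' = i then 0 else α
  | .b i' => if i' = i then α + m else m
  | .ah z j => if z = i.val.testBit j.val then α else m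
  | .bh z j => if z = i.val.testBit j.val then m else α
  | .as j => if y i j then m else α
  | .bs j => if y i j then m else α

variable {h s ℓ : ℕ} (x y : Fin (2 ^ s) → Fin ℓ → Bool) (α β : ℕ)

lemma prow_bounds (m : ℕ) (i : Fin (2^s)) (r : Fin (2*s+ℓ)) (hm : α ≤ m) (hm2 : m ≤ 2*α) :
    α ≤ prowPot y α m i r ∧ prowPot y α m i r ≤ 2*α := by
  unfold prowPot
  split_ifs <;> omega

lemma gpot_core (hα : 0 < α) (hαβ : α < β) (i : Fin (2^s))
    (hF : ∀ j : Fin ℓ, ¬(x i j = true ∧ y i j = true)) :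
    ∀ a b : RV h s ℓ, rgadgetAdj0 a b →
      gpot y α (min β (2*α)) i b ≤ gpot y α (min β (2*α)) i a + rgadgetW x y α β a b ∧
      gpot y α (min β (2*α)) i a ≤ gpot y α (min β (2*α)) i b + rgadgetW x y α β a b := by
  intro a b hab
  set m := min β (2*α) with hmdef
  have hm1 : α < m := by omega
  have hm2 : m ≤ 2*α := by omega
  have hm3 : m ≤ β := by omega
  cases a with
  | t mm =>
      cases b with
      | t mm' => exact ⟨by simp only [gpot, rgadgetW]; omega, by simp only [gpot, rgadgetW]; omega⟩
      | p r k =>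
          have hb := prow_bounds (α := α) y m i r (by omega) hm2
          refine ⟨?_, ?_⟩ <;> simp only [gpot, rgadgetW] <;> omega
      | _ => exact hab.elim
  | p r k =>
      cases b with
      | p r' k' =>
          obtain ⟨rfl, -⟩ := hab
          exact ⟨by simp only [gpot, rgadgetW]; omega, by simp only [gpot, rgadgetW]; omega⟩
      | t mm =>
          have hb := prow_bounds (α := α) y m i r (by omega) hm2
          refine ⟨?_, ?_⟩ <;> simp only [gpot, rgadgetW] <;> omega
      | _ => exact hab.elim
  | a0 =>
      cases b with
      | a i' =>
          refine ⟨?_, ?_⟩ <;> simp only [gpot, rgadgetW] <;> split_ifs <;> omega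
      | _ => exact hab.elim
  | a i' =>
      cases b with
      | a i'' =>
          refine ⟨?_, ?_⟩ <;> simp only [gpot, rgadgetW] <;> split_ifs <;> omega
      | ah z j =>
          have hz : z = i'.val.testBit j.val := hab
          by_cases hii : i' = i
          · subst hii
            refine ⟨?_, ?_⟩ <;> simp only [gpot, rgadgetW, hz, if_pos rfl, if_pos] <;> omega
          · refine ⟨?_, ?_⟩ <;> simp only [gpot, rgadgetW, if_neg hii] <;>
              split_ifs <;> omega
      | as j =>
          by_cases hii : i' = i
          · subst hii
            by_cases hx' : x i' j = true
            · have hy' : y i' j = false := by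
                have := hF j
                cases hyy : y i' j
                · rfl
                · exact absurd ⟨hx', hyy⟩ this
              refine ⟨?_, ?_⟩ <;>
                simp only [gpot, rgadgetW, hx', hy', if_pos rfl, if_true, if_false,
                  Bool.false_eq_true] <;> omega
            · refine ⟨?_, ?_⟩ <;>
                simp only [gpot, rgadgetW, if_pos rfl] <;> split_ifs <;> omega
          · refine ⟨?_, ?_⟩ <;> simp only [gpot, rgadgetW, if_neg hii] <;>
              split_ifs <;> omega
      | _ => exact hab.elim
  | b i' =>
      cases b with
      | b i'' =>
          refine ⟨?_, ?_⟩ <;> simp only [gpot, rgadgetW] <;> split_ifs <;> omega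
      | bh z j =>
          have hz : z = i'.val.testBit j.val := hab
          by_cases hii : i' = i
          · subst hii
            refine ⟨?_, ?_⟩ <;> simp only [gpot, rgadgetW, hz, if_pos rfl, if_pos] <;> omega
          · refine ⟨?_, ?_⟩ <;> simp only [gpot, rgadgetW, if_neg hii] <;>
              split_ifs <;> omega
      | bs j =>
          by_cases hii : i' = i
          · subst hii
            refine ⟨?_, ?_⟩ <;> simp only [gpot, rgadgetW, if_pos rfl] <;>
              split_ifs <;> omega
          · refine ⟨?_, ?_⟩ <;> simp only [gpot, rgadgetW, if_neg hii] <;>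
              split_ifs <;> omega
      | _ => exact hab.elim
  | ah z j =>
      cases b with
      | p r k =>
          obtain ⟨hr, -⟩ := hab
          have hrs : r.val < 2*s := by have := j.isLt; split at hr <;> omega
          have hdiv : r.val / 2 = j.val := by split at hr <;> omega
          have hmod : decide (r.val % 2 = 1) = z := by
            cases hzz : z <;> rw [hzz] at hr <;> simp at hr ⊢ <;> omega
          refine ⟨?_, ?_⟩ <;>
            simp only [gpot, rgadgetW, prowPot, dif_pos hrs, hdiv, hmod] <;>
            (by_cases htb : i.val.testBit j.val = z
             · rw [if_pos htb, if_pos htb.symm]; omega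
             · rw [if_neg htb, if_neg (fun hE => htb hE.symm)]; omega)
      | _ => exact hab.elim
  | bh z j =>
      cases b with
      | p r k =>
          obtain ⟨hr, -⟩ := hab
          have hrs : r.val < 2*s := by have := j.isLt; split at hr <;> omega
          have hdiv : r.val / 2 = j.val := by split at hr <;> omega
          have hmod : decide (r.val % 2 = 1) = !z := by
            cases hzz : z <;> rw [hzz] at hr <;> simp at hr ⊢ <;> omega
          refine ⟨?_, ?_⟩ <;>
            simp only [gpot, rgadgetW, prowPot, dif_pos hrs, hdiv, hmod] <;>
            (cases hzz : z <;> cases htb : i.val.testBit j.val <;>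
              simp [hzz, htb] <;> omega)
      | _ => exact hab.elim
  | as j =>
      cases b with
      | p r k =>
          obtain ⟨hr, -⟩ := hab
          have hrs : ¬ (r.val < 2*s) := by omega
          have hidx : (⟨r.val - 2*s, by have := r.isLt; omega⟩ : Fin ℓ) = j :=
            Fin.ext (by simp; omega)
          refine ⟨?_, ?_⟩ <;>
            simp only [gpot, rgadgetW, prowPot, dif_neg hrs, hidx] <;> omega
      | _ => exact hab.elim
  | bs j =>
      cases b with
      | p r k =>
          obtain ⟨hr, -⟩ := hab
          have hrs : ¬ (r.val < 2*s) := by omega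
          have hidx : (⟨r.val - 2*s, by have := r.isLt; omega⟩ : Fin ℓ) = j :=
            Fin.ext (by simp; omega)
          refine ⟨?_, ?_⟩ <;>
            simp only [gpot, rgadgetW, prowPot, dif_neg hrs, hidx] <;> omega
      | _ => exact hab.elim

end Lower

section Assemble

open SimpleGraph

/-- potential for lower-bounding distances to `a_0` -/
def phiPot {h s ℓ : ℕ} (α : ℕ) : RV h s ℓ → ℕ
  | .a0 => 3*α
  | .a _ => α
  | _ => 0

/-- potential for lower-bounding distances from `a_0` -/
def psiPot {h s ℓ : ℕ} (α : ℕ) : RV h s ℓ → ℕ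
  | .a0 => 0
  | .a _ => 2*α
  | _ => 3*α

variable {h s ℓ : ℕ} (x y : Fin (2 ^ s) → Fin ℓ → Bool) (α β : ℕ)

lemma phi_core (hαβ : α < β) :
    ∀ a b : RV h s ℓ, rgadgetAdj0 a b →
      phiPot α b ≤ phiPot α a + rgadgetW x y α β a b ∧
      phiPot α a ≤ phiPot α b + rgadgetW x y α β a b := by
  intro a b hab
  cases a <;> cases b <;>
    first
      | exact hab.elim
      | (refine ⟨?_, ?_⟩ <;> simp only [phiPot, rgadgetW] <;> (try split_ifs) <;> omega)

lemma psi_core (hαβ : α < β) :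
    ∀ a b : RV h s ℓ, rgadgetAdj0 a b →
      psiPot α b ≤ psiPot α a + rgadgetW x y α β a b ∧
      psiPot α a ≤ psiPot α b + rgadgetW x y α β a b := by
  intro a b hab
  cases a <;> cases b <;>
    first
      | exact hab.elim
      | (refine ⟨?_, ?_⟩ <;> simp only [psiPot, rgadgetW] <;> (try split_ifs) <;> omega)

lemma lip_of_core (g : RV h s ℓ → ℕ)
    (hcore : ∀ a b, rgadgetAdj0 a b →
      g b ≤ g a + rgadgetW x y α β a b ∧ g a ≤ g b + rgadgetW x y α β a b) :
    ∀ a b, (rgadget h s ℓ).Adj a b →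
      ((g b : ℕ) : ℝ≥0∞) ≤ ((g a : ℕ) : ℝ≥0∞) + ((rgadgetW x y α β a b : ℕ) : ℝ≥0∞) := by
  rintro a b ⟨hne, h1 | h1⟩
  · exact_mod_cast (hcore a b h1).1
  · have h2 := (hcore b a h1).2
    rw [Wsymm x y α β a b]
    exact_mod_cast h2

lemma pot_wecc (g : RV h s ℓ → ℕ)
    (hcore : ∀ a b, rgadgetAdj0 a b →
      g b ≤ g a + rgadgetW x y α β a b ∧ g a ≤ g b + rgadgetW x y α β a b)
    (u v : RV h s ℓ) (hu : g u = 0) :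
    ((g v : ℕ) : ℝ≥0∞) ≤
      wecc (rgadget h s ℓ) (fun a b => ((rgadgetW x y α β a b : ℕ) : ℝ≥0∞)) u := by
  refine le_trans ?_ (le_iSup _ v)
  exact pot_le_wdist (fun w => ((g w : ℕ) : ℝ≥0∞)) (lip_of_core x y α β g hcore)
    (by show ((g u : ℕ) : ℝ≥0∞) = 0; rw [hu]; simp)

end Assemble

/-- For the radius gadget `(G,w)`: if `F'(x,y)=1` then
`R_{G,w} ≤ max{2α, β} + n`, and if `F'(x,y)=0` then `R_{G,w} ≥ min{α+β, 3α}`,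
where `n = |V|` and `F'(x,y) = ⋁_{i,j} (x_{i,j} ∧ y_{i,j})`. -/
theorem stmt4 (h s ℓ : ℕ) (hh : 1 ≤ h) (hs : 1 ≤ s) (hℓ : 1 ≤ ℓ)
    (α β : ℕ) (hα : 0 < α) (hαβ : α < β)
    (x y : Fin (2 ^ s) → Fin ℓ → Bool)
    (n : ℕ) (hn : n = Fintype.card (RV h s ℓ)) :
    ((∃ (i : Fin (2 ^ s)) (j : Fin ℓ), x i j = true ∧ y i j = true) →
      wrad (rgadget h s ℓ) (fun u v => ((rgadgetW x y α β u v : ℕ) : ℝ≥0∞)) ≤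
        ((max (2 * α) β : ℕ) : ℝ≥0∞) + (n : ℝ≥0∞)) ∧
    ((¬ ∃ (i : Fin (2 ^ s)) (j : Fin ℓ), x i j = true ∧ y i j = true) →
      ((min (α + β) (3 * α) : ℕ) : ℝ≥0∞) ≤
        wrad (rgadget h s ℓ) (fun u v => ((rgadgetW x y α β u v : ℕ) : ℝ≥0∞))) := by
  constructor
  · rintro ⟨i, j, hx, hy⟩
    refine le_trans (iInf_le _ (RV.a i)) ?_
    refine le_trans (iSup_le fun v => ecc_ub x y α β hh hs hℓ hα i j hx hy n hn v) ?_
    push_cast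
    exact le_rfl
  · intro hne
    have hF : ∀ (i : Fin (2^s)) (jj : Fin ℓ), ¬(x i jj = true ∧ y i jj = true) :=
      fun i jj hc => hne ⟨i, jj, hc⟩
    refine le_iInf fun u => ?_
    have hphi : ∀ u : RV h s ℓ, phiPot α u = 0 →
        ((min (α + β) (3*α) : ℕ) : ℝ≥0∞) ≤
          wecc (rgadget h s ℓ) (fun a b => ((rgadgetW x y α β a b : ℕ) : ℝ≥0∞)) u := by
      intro u h0
      have hv := pot_wecc x y α β (phiPot α) (phi_core x y α β hαβ) u .a0 h0
      refine le_trans ?_ hv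
      rw [show phiPot (h := h) (s := s) (ℓ := ℓ) α .a0 = 3*α from rfl]
      exact Nat.cast_le.mpr (by omega)
    cases u with
    | a i =>
        have hcore := gpot_core (h := h) x y α β hα hαβ i (hF i)
        have hv := pot_wecc x y α β (gpot y α (min β (2*α)) i) hcore (.a i) (.b i)
          (by simp [gpot])
        refine le_trans ?_ hv
        rw [show gpot (h := h) y α (min β (2*α)) i (.b i) = α + min β (2*α) by
          simp [gpot]]
        exact Nat.cast_le.mpr (by omega)
    | a0 =>
        have hv := pot_wecc (h := h) x y α β (psiPot α) (psi_core x y α β hαβ) .a0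
          (.b ⟨0, two_pow_pos' s⟩) rfl
        refine le_trans ?_ hv
        rw [show psiPot (h := h) (s := s) (ℓ := ℓ) α (.b ⟨0, two_pow_pos' s⟩) = 3*α from rfl]
        exact Nat.cast_le.mpr (by omega)
    | t m => exact hphi _ rfl
    | p r k => exact hphi _ rfl
    | b i => exact hphi _ rfl
    | ah z j => exact hphi _ rfl
    | bh z j => exact hphi _ rfl
    | as j => exact hphi _ rfl
    | bs j => exact hphi _ rfl
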